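/- Fix a constant q > 0 and the bowl transform ψ : ℝ^p → ℝ^(p+1). Then ψ is injective: for all x, y ∈ ℝ^p, ψ(x) = ψ(y) implies x = y. -/

import Mathlib

open Real


-- basic tanh facts
lemma tanh_nonneg' {t : ℝ} (ht : 0 ≤ t) : 0 ≤ Real.tanh t := by
  rw [Real.tanh_eq_sinh_div_cosh]
  exact div_nonneg (by simpa using ht) (Real.cosh_pos t).le

lemma tanh_pos' {t : ℝ} (ht : 0 < t) : 0 < Real.tanh t := by
  rw [Real.tanh_eq_sinh_div_cosh]
  exact div_pos (by simpa using ht) (Real.cosh_pos t)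

lemma tanh_lt_one' (t : ℝ) : Real.tanh t < 1 := by
  rw [Real.tanh_eq_sinh_div_cosh]
  exact (div_lt_one (Real.cosh_pos t)).2 (Real.sinh_lt_cosh t)

lemma tanh_lt_tanh' {a b : ℝ} (hab : a < b) : Real.tanh a < Real.tanh b := by
  rw [Real.tanh_eq_sinh_div_cosh, Real.tanh_eq_sinh_div_cosh,
    div_lt_div_iff₀ (Real.cosh_pos a) (Real.cosh_pos b)]
  nlinarith [Real.sinh_sub b a, (Real.sinh_pos_iff (x := b - a)).2 (by linarith)]

lemma sinh_le_mul_cosh {t : ℝ} (ht : 0 ≤ t) : Real.sinh t ≤ t * Real.cosh t := by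
  have hmono : MonotoneOn (fun t => t * Real.cosh t - Real.sinh t) (Set.Ici 0) := by
    apply monotoneOn_of_hasDerivWithinAt_nonneg (f' := fun t => t * Real.sinh t)
      (convex_Ici 0)
    · exact ((continuous_id.mul Real.continuous_cosh).sub Real.continuous_sinh).continuousOn
    · intro x hx
      have : HasDerivAt (fun t => t * Real.cosh t - Real.sinh t)
          (1 * Real.cosh x + x * Real.sinh x - Real.cosh x) x :=
        ((hasDerivAt_id x).mul (Real.hasDerivAt_cosh x)).sub (Real.hasDerivAt_sinh x)
      simpa using this.hasDerivWithinAt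
    · intro x hx
      rw [interior_Ici] at hx
      exact mul_nonneg (le_of_lt hx) (Real.sinh_nonneg_iff.2 hx.le)
  have := hmono (Set.self_mem_Ici) (Set.mem_Ici.2 ht) ht
  simp only [Real.sinh_zero, Real.cosh_zero] at this
  linarith

lemma tanh_le_self' {t : ℝ} (ht : 0 ≤ t) : Real.tanh t ≤ t := by
  rw [Real.tanh_eq_sinh_div_cosh, div_le_iff₀ (Real.cosh_pos t)]
  exact sinh_le_mul_cosh ht


lemma exp_165_lt : Real.exp (16/5) < 128/5 := by
  have h5 : Real.exp (16/5) ^ 5 < (128/5 : ℝ) ^ 5 := by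
    have h : Real.exp (16/5) ^ 5 = Real.exp 1 ^ 16 := by
      rw [← Real.exp_nat_mul, ← Real.exp_nat_mul]; norm_num
    rw [h]
    calc Real.exp 1 ^ 16 < 2.7182818286 ^ 16 :=
          pow_lt_pow_left₀ Real.exp_one_lt_d9 (Real.exp_pos 1).le (by norm_num)
      _ < (128/5 : ℝ) ^ 5 := by norm_num
  exact lt_of_pow_lt_pow_left₀ 5 (by norm_num) h5

lemma lt_exp_165 : (24 : ℝ) < Real.exp (16/5) := by
  have h5 : (24 : ℝ) ^ 5 < Real.exp (16/5) ^ 5 := by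
    have h : Real.exp (16/5) ^ 5 = Real.exp 1 ^ 16 := by
      rw [← Real.exp_nat_mul, ← Real.exp_nat_mul]; norm_num
    rw [h]
    calc (24:ℝ) ^ 5 < 2.7182818283 ^ 16 := by norm_num
      _ < Real.exp 1 ^ 16 :=
          pow_lt_pow_left₀ Real.exp_one_gt_d9 (by norm_num) (by norm_num)
  exact lt_of_pow_lt_pow_left₀ 5 (Real.exp_pos _).le h5

lemma sinh_lt_four_mul {z : ℝ} (h0 : 0 < z) (h1 : z ≤ 16/5) : Real.sinh z < 4 * z := by
  have hconv : ConvexOn ℝ (Set.Icc 0 (16/5)) Real.sinh := by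
    apply convexOn_of_deriv2_nonneg (convex_Icc _ _) Real.continuous_sinh.continuousOn
      Real.differentiable_sinh.differentiableOn
    · rw [Real.deriv_sinh]; exact Real.differentiable_cosh.differentiableOn
    · intro x hx
      have h : deriv^[2] Real.sinh = Real.sinh := by
        ext t; simp [Function.iterate_succ, Real.deriv_sinh, Real.deriv_cosh]
      rw [h]
      rw [interior_Icc] at hx
      exact Real.sinh_nonneg_iff.2 hx.1.le
  have ha : (0:ℝ) ≤ 1 - z/(16/5) := by
    have := div_le_one_of_le₀ h1 (by norm_num : (0:ℝ) ≤ 16/5)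
    linarith
  have hb : (0:ℝ) ≤ z/(16/5) := by positivity
  have key := hconv.2 (Set.mem_Icc.2 ⟨le_refl (0:ℝ), by norm_num⟩)
    (Set.mem_Icc.2 ⟨by norm_num, le_refl ((16:ℝ)/5)⟩) ha hb (by ring)
  have heq : (1 - z/(16/5)) • (0:ℝ) + (z/(16/5)) • (16/5 : ℝ) = z := by
    simp only [smul_eq_mul]; field_simp; ring
  rw [heq] at key
  simp only [smul_eq_mul, Real.sinh_zero, mul_zero, zero_add] at key
  have hsz : Real.sinh (16/5) < 64/5 := by
    have h2 := exp_165_lt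
    have h3 := Real.exp_pos (-(16/5) : ℝ)
    rw [Real.sinh_eq]
    linarith
  have hz5 : (0:ℝ) < z / (16/5) := by positivity
  calc Real.sinh z ≤ z/(16/5) * Real.sinh (16/5) := key
    _ < z/(16/5) * (64/5) := mul_lt_mul_of_pos_left hsz hz5
    _ = 4 * z := by ring



lemma hasDerivAt_tanh' (t : ℝ) :
    HasDerivAt Real.tanh (1 / Real.cosh t ^ 2) t := by
  have h : HasDerivAt (fun t => Real.sinh t / Real.cosh t)
      ((Real.cosh t * Real.cosh t - Real.sinh t * Real.sinh t) / Real.cosh t ^ 2) t :=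
    (Real.hasDerivAt_sinh t).div (Real.hasDerivAt_cosh t) (Real.cosh_pos t).ne'
  have heq : (Real.cosh t * Real.cosh t - Real.sinh t * Real.sinh t) / Real.cosh t ^ 2
      = 1 / Real.cosh t ^ 2 := by
    rw [show Real.cosh t * Real.cosh t - Real.sinh t * Real.sinh t
        = Real.cosh t ^ 2 - Real.sinh t ^ 2 by ring, Real.cosh_sq_sub_sinh_sq]
  rw [heq] at h
  exact h.congr_of_eventuallyEq (Filter.Eventually.of_forall fun x =>
    (Real.tanh_eq_sinh_div_cosh x))

lemma F_strictMono : StrictMonoOn (fun t => Real.tanh t ^ 4 / t) (Set.Ioc 0 (8/5)) := by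
  apply strictMonoOn_of_hasDerivWithinAt_pos
    (f' := fun t => (4 * Real.tanh t ^ 3 * (1 / Real.cosh t ^ 2) * t - Real.tanh t ^ 4 * 1) / t ^ 2)
    (convex_Ioc _ _)
  · apply ContinuousOn.div
    · exact ((Real.continuous_sinh.div Real.continuous_cosh
        fun x => (Real.cosh_pos x).ne').pow 4).continuousOn.congr
        fun x _ => by simp [Real.tanh_eq_sinh_div_cosh]
    · exact continuousOn_id
    · intro x hx; exact (ne_of_gt hx.1)
  · intro t ht
    rw [interior_Ioc] at ht
    exact (((hasDerivAt_tanh' t).pow 4).div (hasDerivAt_id t)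
      (ne_of_gt ht.1)).hasDerivWithinAt
  · intro t ht
    rw [interior_Ioc] at ht
    obtain ⟨ht0, ht8⟩ := ht
    have hC := Real.cosh_pos t
    have hS : 0 < Real.sinh t := Real.sinh_pos_iff.2 ht0
    have htanh : 0 < Real.tanh t := by
      rw [Real.tanh_eq_sinh_div_cosh]; exact div_pos hS hC
    apply div_pos _ (by positivity)
    have hkey : Real.sinh t * Real.cosh t < 4 * t := by
      have h2 := sinh_lt_four_mul (z := 2*t) (by linarith) (by linarith)
      rw [Real.sinh_two_mul] at h2
      linarith
    have h1 : Real.tanh t * Real.cosh t ^ 2 < 4 * t := by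
      rw [Real.tanh_eq_sinh_div_cosh]
      rw [div_mul_eq_mul_div, pow_two]
      rw [div_lt_iff₀ hC] at *
      · nlinarith
    have h2 : Real.tanh t < 4 * t * (1 / Real.cosh t ^ 2) := by
      rw [mul_one_div]
      exact (lt_div_iff₀ (by positivity)).2 (by linarith)
    nlinarith [pow_pos htanh 3, mul_pos ht0 (pow_pos htanh 3)]



-- strict antitonicity of t^6 (1-t)^2 on [3/4, 1]
lemma xi_strictAnti : StrictAntiOn (fun t : ℝ => t ^ 6 * (1 - t) ^ 2) (Set.Icc (3/4) 1) := by
  apply strictAntiOn_of_hasDerivWithinAt_neg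
    (f' := fun t => 6 * t ^ 5 * (1 - t) ^ 2 + t ^ 6 * (2 * (1 - t) ^ 1 * (0 - 1)))
    (convex_Icc _ _)
  · exact (continuousOn_id.pow 6).mul (((continuousOn_const).sub continuousOn_id).pow 2)
  · intro t ht
    exact ((hasDerivAt_pow 6 t).mul
      (((hasDerivAt_const t (1:ℝ)).sub (hasDerivAt_id t)).pow 2)).hasDerivWithinAt
  · intro t ht
    rw [interior_Icc] at ht
    obtain ⟨h1, h2⟩ := ht
    nlinarith [pow_pos (by linarith : (0:ℝ) < t) 5, pow_pos (by linarith : (0:ℝ) < t) 6,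
      mul_pos (pow_pos (by linarith : (0:ℝ) < t) 5) (mul_pos (by linarith : (0:ℝ) < 1 - t)
        (by linarith : (0:ℝ) < 4*t - 3))]

lemma key_aux (a b : ℝ) (ha : 0 < a) (hab : a < b)
    (hxi : Real.tanh a ^ 6 * (1 - Real.tanh a) ^ 2 = Real.tanh b ^ 6 * (1 - Real.tanh b) ^ 2)
    (heq : Real.tanh b ^ 4 * a = Real.tanh a ^ 4 * b) : False := by
  set u := Real.tanh a with hu
  set w := Real.tanh b with hw
  have hb : 0 < b := ha.trans hab
  have hu0 : 0 < u := tanh_pos' ha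
  have hw0 : 0 < w := tanh_pos' hb
  have hu1 : u < 1 := tanh_lt_one' a
  have hw1 : w < 1 := tanh_lt_one' b
  have huw : u < w := tanh_lt_tanh' hab
  rcases le_or_gt b (8/5) with hb8 | hb8
  · -- case 1 : F strictly monotone
    have hF := F_strictMono (Set.mem_Ioc.2 ⟨ha, le_of_lt (hab.trans_le hb8)⟩)
      (Set.mem_Ioc.2 ⟨hb, hb8⟩) hab
    simp only at hF
    rw [div_lt_div_iff₀ ha hb] at hF
    nlinarith
  · -- case 2 : b > 8/5
    have hu34 : u < 3/4 := by
      by_contra h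
      push_neg at h
      have := xi_strictAnti (Set.mem_Icc.2 ⟨h, hu1.le⟩)
        (Set.mem_Icc.2 ⟨h.trans huw.le, hw1.le⟩) huw
      simp only at this
      linarith
    -- 4 b (1 - w) < w
    have hwb : 4 * b * (1 - w) < w := by
      have hC := Real.cosh_pos b
      have hexp : 8 * b < Real.exp (2 * b) - 1 := by
        have h1 : Real.exp (2*b) = Real.exp (16/5) * Real.exp (2*b - 16/5) :=
          by rw [← Real.exp_add]; ring_nf
        have h2 : (2*b - 16/5) + 1 ≤ Real.exp (2*b - 16/5) := Real.add_one_le_exp _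
        have h3 : Real.exp (16/5) * (2*b - 16/5 + 1) ≤ Real.exp (16/5) * Real.exp (2*b-16/5) :=
          mul_le_mul_of_nonneg_left h2 (Real.exp_pos _).le
        have h4 : (24:ℝ) * (2*b - 16/5 + 1) < Real.exp (16/5) * (2*b - 16/5 + 1) := by
          apply mul_lt_mul_of_pos_right lt_exp_165
          linarith
        rw [h1]
        nlinarith
      -- w = tanh b = sinh b / cosh b ; 1 - w = exp(-b)/cosh b
      have h1w : 1 - w = Real.exp (-b) / Real.cosh b := by
        rw [hw, Real.tanh_eq_sinh_div_cosh]
        field_simp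
        rw [Real.cosh_sub_sinh]
      rw [h1w, hw, Real.tanh_eq_sinh_div_cosh]
      have hE := Real.exp_pos b
      have hiE := Real.exp_pos (-b)
      have hxxy : Real.exp b * Real.exp b * Real.exp (-b) = Real.exp b := by
        rw [mul_assoc, ← Real.exp_add]; simp
      have h2b : Real.exp (2*b) = Real.exp b * Real.exp b := by
        rw [two_mul, Real.exp_add]
      have h5 := mul_lt_mul_of_pos_right hexp hiE
      rw [h2b] at h5
      have h6 : 8*b*Real.exp (-b) < Real.exp b - Real.exp (-b) := by nlinarith
      have h7 : 4*b*Real.exp (-b) < Real.sinh b := by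
        rw [Real.sinh_eq]; linarith
      rw [mul_div_assoc' (4*b), div_lt_div_iff₀ hC hC]
      nlinarith
    -- finish case 2
    have hua : u ≤ a := tanh_le_self' ha.le
    have h16 : (1:ℝ)/16 < (1-u)^2 := by nlinarith
    have h7 : u^6 < 16 * (w^6 * (1-w)^2) := by
      nlinarith [mul_lt_mul_of_pos_left h16 (pow_pos hu0 6)]
    have h8 : (4*b*(1-w))^2 < w^2 := by
      have hpos : 0 ≤ 4*b*(1-w) := mul_nonneg (by linarith) (by linarith)
      nlinarith
    have h9 : u^6 * b^2 < w^8 := by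
      calc u^6 * b^2 ≤ 16 * (w^6*(1-w)^2) * b^2 :=
            mul_le_mul_of_nonneg_right h7.le (sq_nonneg b)
        _ = w^6 * (4*b*(1-w))^2 := by ring
        _ < w^6 * w^2 := mul_lt_mul_of_pos_left h8 (pow_pos hw0 6)
        _ = w^8 := by ring
    have h10 : w^4 ≤ u^3 * b := by
      have h11 : w^4 * u ≤ (u^3*b) * u := by
        calc w^4 * u ≤ w^4 * a := mul_le_mul_of_nonneg_left hua (pow_nonneg hw0.le 4)
          _ = u^4 * b := heq
          _ = (u^3*b) * u := by ring
      exact le_of_mul_le_mul_right h11 hu0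
    have h12 := mul_self_le_mul_self (pow_nonneg hw0.le 4) h10
    have h13 : w^8 ≤ u^6 * b^2 := by
      calc w^8 = w^4 * w^4 := by ring
        _ ≤ (u^3*b) * (u^3*b) := h12
        _ = u^6 * b^2 := by ring
    linarith



lemma norm_aux {p : ℕ} (c d : ℝ) (hc : 0 ≤ c) (hd : 0 ≤ d)
    (x y : EuclideanSpace ℝ (Fin p)) (h : ∀ i, c * x i = d * y i) :
    c * ‖x‖ = d * ‖y‖ := by
  have hsm : c • x = d • y := by
    ext i
    simp only [PiLp.smul_apply, smul_eq_mul]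
    exact h i
  have hn : ‖c • x‖ = ‖d • y‖ := by rw [hsm]
  rwa [norm_smul, norm_smul, Real.norm_eq_abs, Real.norm_eq_abs,
    abs_of_nonneg hc, abs_of_nonneg hd] at hn

/-- The bowl transform `ψ : ℝ^p → ℝ^(p+1)`.  With `u(x) = tanh(‖x‖/q)`, the first `p`
coordinates are `v₁(x) = 10·u(x)²·(1−u(x))²·x` and the last coordinate is
`v₂(x) = 10·u(x)⁶·(1−u(x))²`. -/
noncomputable def bowl (p : ℕ) (q : ℝ) (x : EuclideanSpace ℝ (Fin p)) :
    EuclideanSpace ℝ (Fin (p + 1)) :=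
  WithLp.toLp 2 (Fin.snoc (α := fun _ : Fin (p + 1) => ℝ)
    (fun i : Fin p =>
      10 * Real.tanh (‖x‖ / q) ^ 2 * (1 - Real.tanh (‖x‖ / q)) ^ 2 * x i)
    (10 * Real.tanh (‖x‖ / q) ^ 6 * (1 - Real.tanh (‖x‖ / q)) ^ 2))

/-- for `q > 0`, the bowl transform `ψ : ℝ^p → ℝ^(p+1)` is injective. -/
lemma key (a b : ℝ) (ha : 0 < a) (hb : 0 < b)
    (hxi : Real.tanh a ^ 6 * (1 - Real.tanh a) ^ 2 = Real.tanh b ^ 6 * (1 - Real.tanh b) ^ 2)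
    (hA : Real.tanh a ^ 2 * (1 - Real.tanh a) ^ 2 * a
        = Real.tanh b ^ 2 * (1 - Real.tanh b) ^ 2 * b) : a = b := by
  rcases lt_trichotomy a b with h | h | h
  · exfalso
    have hw0 : 0 < Real.tanh b := tanh_pos' hb
    have hw1 : Real.tanh b < 1 := tanh_lt_one' b
    have hne : (Real.tanh b ^ 2 * (1 - Real.tanh b) ^ 2 : ℝ) ≠ 0 :=
      (mul_pos (pow_pos hw0 2) (pow_pos (by linarith) 2)).ne'
    have h4 : Real.tanh b ^ 2 * (1 - Real.tanh b) ^ 2 * (Real.tanh b ^ 4 * a)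
        = Real.tanh b ^ 2 * (1 - Real.tanh b) ^ 2 * (Real.tanh a ^ 4 * b) := by
      linear_combination Real.tanh a ^ 4 * hA - a * hxi
    exact key_aux a b ha h hxi (mul_left_cancel₀ hne h4)
  · exact h
  · exfalso
    have hw0 : 0 < Real.tanh a := tanh_pos' ha
    have hw1 : Real.tanh a < 1 := tanh_lt_one' a
    have hne : (Real.tanh a ^ 2 * (1 - Real.tanh a) ^ 2 : ℝ) ≠ 0 :=
      (mul_pos (pow_pos hw0 2) (pow_pos (by linarith) 2)).ne'
    have h4 : Real.tanh a ^ 2 * (1 - Real.tanh a) ^ 2 * (Real.tanh a ^ 4 * b)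
        = Real.tanh a ^ 2 * (1 - Real.tanh a) ^ 2 * (Real.tanh b ^ 4 * a) := by
      linear_combination Real.tanh b ^ 4 * hA.symm - b * hxi.symm
    exact key_aux b a hb h hxi.symm (mul_left_cancel₀ hne h4)

lemma tanh_eq_zero_iff' {t : ℝ} : Real.tanh t = 0 ↔ t = 0 := by
  rw [Real.tanh_eq_sinh_div_cosh, div_eq_zero_iff]
  simp [(Real.cosh_pos t).ne']

set_option maxHeartbeats 1000000 in
theorem bowl_injective (p : ℕ) (q : ℝ) (hq : 0 < q)
    (x y : EuclideanSpace ℝ (Fin p)) (hxy : bowl p q x = bowl p q y) : x = y := by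
  set u := Real.tanh (‖x‖ / q) with hu
  set w := Real.tanh (‖y‖ / q) with hw
  have hu0 : 0 ≤ u := by
    rw [hu, Real.tanh_eq_sinh_div_cosh]
    exact div_nonneg (by simp [div_nonneg (norm_nonneg x) hq.le]) (Real.cosh_pos _).le
  have hw0 : 0 ≤ w := by
    rw [hw, Real.tanh_eq_sinh_div_cosh]
    exact div_nonneg (by simp [div_nonneg (norm_nonneg y) hq.le]) (Real.cosh_pos _).le
  have hu1 : u < 1 := tanh_lt_one' _
  have hw1 : w < 1 := tanh_lt_one' _
  have hlast := congrFun (congrArg WithLp.ofLp hxy) (Fin.last p)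
  simp only [bowl, WithLp.ofLp_toLp, Fin.snoc_last, ← hu, ← hw] at hlast
  have hcoord : ∀ i : Fin p, 10 * u ^ 2 * (1 - u) ^ 2 * x i
      = 10 * w ^ 2 * (1 - w) ^ 2 * y i := by
    intro i
    have := congrFun (congrArg WithLp.ofLp hxy) (Fin.castSucc i)
    simpa only [bowl, WithLp.ofLp_toLp, Fin.snoc_castSucc, ← hu, ← hw] using this
  have hnorm : 10 * u ^ 2 * (1 - u) ^ 2 * ‖x‖ = 10 * w ^ 2 * (1 - w) ^ 2 * ‖y‖ :=
    norm_aux _ _ (by nlinarith [sq_nonneg u, sq_nonneg (1-u)])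
      (by nlinarith [sq_nonneg w, sq_nonneg (1-w)]) x y hcoord
  rcases eq_or_lt_of_le (norm_nonneg x) with hx0 | hx0
  · -- ‖x‖ = 0
    have hxz : x = 0 := norm_eq_zero.1 hx0.symm
    have huz : u = 0 := by rw [hu, ← hx0, zero_div, Real.tanh_zero]
    have hwz : w = 0 := by
      rw [huz] at hlast
      have : w ^ 6 * (1 - w) ^ 2 = 0 := by nlinarith
      have h6 : w ^ 6 = 0 := by
        rcases mul_eq_zero.1 this with h | h
        · exact h
        · exact absurd h (pow_ne_zero 2 (sub_pos.2 hw1).ne')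
      have := pow_eq_zero_iff (n := 6) (by norm_num) |>.1 h6
      exact this
    have hyz : y = 0 := by
      have h0 : ‖y‖ / q = 0 := tanh_eq_zero_iff'.1 hwz
      exact norm_eq_zero.1 ((div_eq_zero_iff.1 h0).resolve_right hq.ne')
    rw [hxz, hyz]
  rcases eq_or_lt_of_le (norm_nonneg y) with hy0 | hy0
  · -- ‖y‖ = 0 (symmetric)
    have hyz : y = 0 := norm_eq_zero.1 hy0.symm
    have hwz : w = 0 := by rw [hw, ← hy0, zero_div, Real.tanh_zero]
    have huz : u = 0 := by
      rw [hwz] at hlast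
      have : u ^ 6 * (1 - u) ^ 2 = 0 := by nlinarith
      have h6 : u ^ 6 = 0 := by
        rcases mul_eq_zero.1 this with h | h
        · exact h
        · exact absurd h (pow_ne_zero 2 (sub_pos.2 hu1).ne')
      exact pow_eq_zero_iff (n := 6) (by norm_num) |>.1 h6
    have hxz : x = 0 := by
      have h0 : ‖x‖ / q = 0 := tanh_eq_zero_iff'.1 huz
      exact norm_eq_zero.1 ((div_eq_zero_iff.1 h0).resolve_right hq.ne')
    rw [hxz, hyz]
  -- main case
  have ha : 0 < ‖x‖ / q := div_pos hx0 hq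
  have hb : 0 < ‖y‖ / q := div_pos hy0 hq
  have hab : ‖x‖ / q = ‖y‖ / q := by
    apply key _ _ ha hb
    · rw [← hu, ← hw]; linarith
    · rw [← hu, ← hw]
      have hq' : q ≠ 0 := hq.ne'
      field_simp
      nlinarith [hnorm]
  have hxy' : ‖x‖ = ‖y‖ := by
    have := congrArg (fun t => t * q) hab
    simpa [div_mul_cancel₀, hq.ne'] using this
  have huw : u = w := by rw [hu, hw, hxy']
  have hc : (0:ℝ) < 10 * u ^ 2 * (1 - u) ^ 2 := by
    have h1 : 0 < u := tanh_pos' ha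
    have h2 : 0 < 1 - u := by linarith
    exact mul_pos (mul_pos (by norm_num) (pow_pos h1 2)) (pow_pos h2 2)
  ext i
  have := hcoord i
  rw [← huw] at this
  exact mul_left_cancel₀ hc.ne' this
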